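/- No regular tree is PUCE: if t : {0,1}^* → {a,b} is a tree whose set of subtrees { t_n : n ∈ {0,1}^* } is finite, then t is not positively ultimately constant everywhere, i.e. there exists a node n ∈ {0,1}^* such that either the set of branches visiting n along which only finitely many prefixes are labelled a by t has μ-measure 0, or the set of branches visiting n along which only finitely many prefixes are labelled b by t has μ-measure 0. -/

import Mathlib

open MeasureTheory
open ENNReal

/-- The cylinder of a finite binary word `w`: the set of branches of the infinite
binary tree that visit the node `w`, i.e. have `w` as a prefix. -/
def cylinder (w : List Bool) : Set (ℕ → Bool) :=
  {b | ∀ i : Fin w.length, b i = w.get i}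

/-- `μ` is the uniform probability measure on the space of branches of the infinite
binary tree: the infinite product of fair-coin Bernoulli(1/2) measures. -/
def IsUniformBernoulli (μ : Measure (ℕ → Bool)) : Prop :=
  IsProbabilityMeasure μ ∧ ∀ w : List Bool, μ (cylinder w) = (2 : ENNReal)⁻¹ ^ w.length

/-- The length-`k` prefix of a branch `b`. -/
def branchPrefix (b : ℕ → Bool) (k : ℕ) : List Bool :=
  List.ofFn fun i : Fin k => b i

namespace Stmt3Aux

def subAt (t : List Bool → Bool) (n : List Bool) : List Bool → Bool := fun m => t (n ++ m)

@[simp] lemma subAt_nil (t : List Bool → Bool) : subAt t [] = t := rfl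

lemma subAt_append (t : List Bool → Bool) (n v : List Bool) :
    subAt t (n ++ v) = subAt (subAt t n) v := by
  funext m; simp [subAt]

def cnt (s : List Bool → Bool) : ℕ → ℕ
  | 0 => if s [] = false then 1 else 0
  | L + 1 => if s [] = false then cnt (subAt s [false]) L + cnt (subAt s [true]) L else 0

noncomputable def Z (s : List Bool → Bool) : ENNReal := ⨅ L : ℕ, (cnt s L : ENNReal) / 2 ^ L

lemma cnt_zero (s : List Bool → Bool) : cnt s 0 = if s [] = false then 1 else 0 := rfl

lemma cnt_succ (s : List Bool → Bool) (L : ℕ) :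
    cnt s (L + 1) = if s [] = false then
      cnt (subAt s [false]) L + cnt (subAt s [true]) L else 0 := rfl

lemma cnt_zero_le (s : List Bool → Bool) : cnt s 0 ≤ 1 := by
  rw [cnt_zero]; split_ifs <;> simp

lemma cnt_succ_le (L : ℕ) : ∀ s : List Bool → Bool, cnt s (L + 1) ≤ 2 * cnt s L := by
  induction L with
  | zero =>
    intro s
    simp only [cnt_succ, cnt_zero]
    split_ifs <;> omega
  | succ L ih =>
    intro s
    rw [cnt_succ s (L + 1), cnt_succ s L]
    split_ifs with h
    · have h0 := ih (subAt s [false])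
      have h1 := ih (subAt s [true])
      omega
    · omega

lemma anti (s : List Bool → Bool) :
    Antitone (fun L : ℕ => (cnt s L : ENNReal) / 2 ^ L) := by
  refine antitone_nat_of_succ_le fun L => ?_
  have h : ((cnt s (L + 1) : ℕ) : ENNReal) ≤ (2 * cnt s L : ℕ) := by
    exact_mod_cast cnt_succ_le L s
  calc (cnt s (L + 1) : ENNReal) / 2 ^ (L + 1)
      ≤ ((2 * cnt s L : ℕ) : ENNReal) / 2 ^ (L + 1) := ENNReal.div_le_div_right h _
    _ = (cnt s L : ENNReal) / 2 ^ L := by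
        push_cast
        rw [pow_succ' (2 : ENNReal) L]
        exact ENNReal.mul_div_mul_left _ _ two_ne_zero ENNReal.ofNat_ne_top

lemma Z_le (s : List Bool → Bool) (L : ℕ) : Z s ≤ (cnt s L : ENNReal) / 2 ^ L := iInf_le _ L

lemma Z_le_one (s : List Bool → Bool) : Z s ≤ 1 := by
  refine (Z_le s 0).trans ?_
  have := cnt_zero_le s
  simp only [pow_zero, div_one]
  exact_mod_cast this

lemma Z_ne_top (s : List Bool → Bool) : Z s ≠ ∞ :=
  fun h => by simpa [h] using Z_le_one s

lemma Z_eq_zero_of_true {s : List Bool → Bool} (h : s [] = true) : Z s = 0 := by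
  refine le_antisymm ((Z_le s 0).trans ?_) zero_le
  simp [cnt, h]

lemma label_false {s : List Bool → Bool} (h : Z s ≠ 0) : s [] = false := by
  cases hs : s [] with
  | false => rfl
  | true => exact absurd (Z_eq_zero_of_true hs) h

lemma Z_rec {s : List Bool → Bool} (h : s [] = false) :
    Z s = (Z (subAt s [false]) + Z (subAt s [true])) / 2 := by
  have htail : Z s = ⨅ L : ℕ, (cnt s (L + 1) : ENNReal) / 2 ^ (L + 1) := by
    refine le_antisymm (le_iInf fun L => iInf_le _ (L + 1)) (le_iInf fun L => ?_)
    exact iInf_le_of_le L (anti s (Nat.le_succ L))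
  have hdiv : ∀ (a : ENNReal) (L : ℕ), a / 2 ^ (L + 1) = a / 2 ^ L / 2 := by
    intro a L
    rw [pow_succ, div_eq_mul_inv, div_eq_mul_inv, div_eq_mul_inv,
      ENNReal.mul_inv (Or.inl (by positivity)) (Or.inl (by simp)), mul_assoc]
  have hterm : ∀ L : ℕ, (cnt s (L + 1) : ENNReal) / 2 ^ (L + 1) =
      ((cnt (subAt s [false]) L : ENNReal) / 2 ^ L +
        (cnt (subAt s [true]) L : ENNReal) / 2 ^ L) / 2 := by
    intro L
    rw [ENNReal.div_add_div_same, hdiv]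
    congr 2
    rw [cnt_succ, if_pos h]
    push_cast
    ring
  rw [htail]
  simp only [hterm]
  have h2 : ∀ f : ℕ → ENNReal, (⨅ L, f L / 2) = (⨅ L, f L) / 2 := by
    intro f
    simp only [div_eq_mul_inv]
    exact (ENNReal.iInf_mul_of_ne (by simp) (by simp)).symm
  rw [h2]
  congr 1
  exact (ENNReal.iInf_add_iInf fun i j => ⟨max i j,
    add_le_add (anti _ (le_max_left i j)) (anti _ (le_max_right i j))⟩).symm

end Stmt3Aux

namespace Stmt3Aux

lemma div_pow_succ (a : ENNReal) (L : ℕ) : a / 2 ^ (L + 1) = a / 2 ^ L / 2 := by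
  rw [pow_succ, div_eq_mul_inv, div_eq_mul_inv, div_eq_mul_inv,
    ENNReal.mul_inv (Or.inl (by positivity)) (Or.inl (by simp)), mul_assoc]

lemma mul_two_div_two (a : ENNReal) : a * 2 / 2 = a := by
  rw [mul_div_assoc, ENNReal.div_self two_ne_zero ENNReal.ofNat_ne_top, mul_one]

@[simp] lemma length_branchPrefix (b : ℕ → Bool) (k : ℕ) :
    (branchPrefix b k).length = k := by simp [branchPrefix]

lemma mem_cylinder_branchPrefix (b : ℕ → Bool) (k : ℕ) :
    b ∈ cylinder (branchPrefix b k) := by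
  intro i
  rcases i with ⟨i, hi⟩
  simp [branchPrefix, List.get_eq_getElem]

lemma branchPrefix_eq {b : ℕ → Bool} {m : List Bool} (hb : b ∈ cylinder m) :
    branchPrefix b m.length = m := by
  apply List.ext_get (by simp)
  intro i h1 h2
  have := hb ⟨i, h2⟩
  simp [branchPrefix, List.get_ofFn] at this ⊢
  exact this

lemma branchPrefix_succ (b : ℕ → Bool) (k : ℕ) :
    branchPrefix b (k + 1) = branchPrefix b k ++ [b k] := by
  show List.ofFn _ = _
  rw [List.ofFn_succ']
  simp [branchPrefix, List.concat_eq_append]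

lemma branchPrefix_prefix (b : ℕ → Bool) {j k : ℕ} (h : j ≤ k) :
    branchPrefix b j <+: branchPrefix b k := by
  induction k with
  | zero => have : j = 0 := by omega
            simp [this]
  | succ k ih =>
    rcases Nat.lt_or_ge j (k + 1) with hlt | hge
    · exact (ih (by omega)).trans (by rw [branchPrefix_succ]; exact ⟨[b k], rfl⟩)
    · have : j = k + 1 := by omega
      simp [this]

lemma exists_append {b : ℕ → Bool} {m : List Bool} {k : ℕ} (hb : b ∈ cylinder m)
    (hk : m.length ≤ k) : ∃ u, branchPrefix b k = m ++ u := by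
  have := branchPrefix_prefix b hk
  rw [branchPrefix_eq hb] at this
  obtain ⟨u, hu⟩ := this
  exact ⟨u, hu.symm⟩

def Ev (t : List Bool → Bool) (m : List Bool) : Set (ℕ → Bool) :=
  {b | b ∈ cylinder m ∧ ∀ j, m.length ≤ j → t (branchPrefix b j) = false}

lemma label_of_mem_Ev {t : List Bool → Bool} {m : List Bool} {b : ℕ → Bool}
    (hb : b ∈ Ev t m) : t m = false := by
  have := hb.2 m.length le_rfl
  rwa [branchPrefix_eq hb.1] at this

lemma Ev_empty {t : List Bool → Bool} {m : List Bool} (h : t m = true) : Ev t m = ∅ := by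
  ext b
  simp only [Set.mem_empty_iff_false, iff_false]
  intro hb
  rw [label_of_mem_Ev hb] at h
  exact Bool.false_ne_true h

lemma Ev_subset (t : List Bool → Bool) (m : List Bool) :
    Ev t m ⊆ Ev t (m ++ [false]) ∪ Ev t (m ++ [true]) := by
  intro b hb
  have hmem : ∀ c : Bool, b m.length = c → b ∈ Ev t (m ++ [c]) := by
    intro c hc
    constructor
    · have h1 : branchPrefix b (m.length + 1) = m ++ [c] := by
        rw [branchPrefix_succ, branchPrefix_eq hb.1, hc]
      rw [← h1]
      exact mem_cylinder_branchPrefix _ _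
    · intro j hj
      refine hb.2 j ?_
      simp only [List.length_append, List.length_singleton] at hj
      omega
  cases hc : b m.length
  · exact Or.inl (hmem false hc)
  · exact Or.inr (hmem true hc)

lemma measure_Ev_le {μ : Measure (ℕ → Bool)} (hμ : IsUniformBernoulli μ)
    (t : List Bool → Bool) (L : ℕ) :
    ∀ m : List Bool, 2 ^ m.length * μ (Ev t m) ≤ (cnt (subAt t m) L : ENNReal) / 2 ^ L := by
  induction L with
  | zero =>
    intro m
    cases h : t m
    · have hroot : subAt t m [] = false := by simpa [subAt] using h
      rw [cnt_zero, if_pos hroot]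
      simp only [Nat.cast_one, pow_zero, div_one]
      calc 2 ^ m.length * μ (Ev t m) ≤ 2 ^ m.length * μ (cylinder m) :=
            mul_le_mul_right (measure_mono fun b hb => hb.1) _
        _ = 1 := by
            rw [hμ.2 m, ← ENNReal.inv_pow]
            exact ENNReal.mul_inv_cancel (pow_ne_zero _ two_ne_zero)
              (ENNReal.pow_ne_top ENNReal.ofNat_ne_top)
    · rw [Ev_empty h]
      simp
  | succ L ih =>
    intro m
    cases h : t m
    · have hroot : subAt t m [] = false := by simpa [subAt] using h
      have hsub : μ (Ev t m) ≤ μ (Ev t (m ++ [false])) + μ (Ev t (m ++ [true])) :=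
        (measure_mono (Ev_subset t m)).trans (measure_union_le _ _)
      have hkey : ∀ c : Bool,
          2 ^ m.length * μ (Ev t (m ++ [c])) ≤
            ((cnt (subAt (subAt t m) [c]) L : ENNReal) / 2 ^ L) / 2 := by
        intro c
        have hlen : (m ++ [c]).length = m.length + 1 := by simp
        have := ih (m ++ [c])
        rw [hlen, subAt_append] at this
        calc 2 ^ m.length * μ (Ev t (m ++ [c]))
            = 2 ^ (m.length + 1) * μ (Ev t (m ++ [c])) / 2 := by
              rw [pow_succ, mul_comm ((2 : ENNReal) ^ m.length) 2, mul_assoc,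
                mul_comm (2 : ENNReal), mul_two_div_two]
          _ ≤ ((cnt (subAt (subAt t m) [c]) L : ENNReal) / 2 ^ L) / 2 :=
              ENNReal.div_le_div_right this _
      calc 2 ^ m.length * μ (Ev t m)
          ≤ 2 ^ m.length * μ (Ev t (m ++ [false])) +
            2 ^ m.length * μ (Ev t (m ++ [true])) := by
            rw [← mul_add]; exact mul_le_mul_right hsub _
        _ ≤ ((cnt (subAt (subAt t m) [false]) L : ENNReal) / 2 ^ L) / 2 +
            ((cnt (subAt (subAt t m) [true]) L : ENNReal) / 2 ^ L) / 2 :=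
            add_le_add (hkey false) (hkey true)
        _ = (cnt (subAt t m) (L + 1) : ENNReal) / 2 ^ (L + 1) := by
            rw [ENNReal.div_add_div_same, ENNReal.div_add_div_same, div_pow_succ]
            congr 2
            rw [cnt_succ, if_pos hroot]
            push_cast
            ring
    · rw [Ev_empty h]
      simp

lemma Z_ne_zero_of_measure {μ : Measure (ℕ → Bool)} (hμ : IsUniformBernoulli μ)
    {t : List Bool → Bool} {m : List Bool} (h : μ (Ev t m) ≠ 0) :
    Z (subAt t m) ≠ 0 := by
  intro hZ
  have hb : 2 ^ m.length * μ (Ev t m) ≤ Z (subAt t m) :=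
    le_iInf fun L => measure_Ev_le hμ t L m
  rw [hZ, le_zero_iff, mul_eq_zero] at hb
  rcases hb with h2 | h0
  · exact absurd h2 (by positivity)
  · exact h h0

end Stmt3Aux

/-- No regular tree over the two-letter alphabet `{a, b}` (encoded as `Bool`,
with `true` playing the role of `a` and `false` the role of `b`) is PUCE:
if the set of subtrees of `t` is finite, then some node `n` fails one of the two
positivity conditions. -/
theorem stmt_3 (μ : Measure (ℕ → Bool)) (hμ : IsUniformBernoulli μ)
    (t : List Bool → Bool)
    (hreg : {s : List Bool → Bool | ∃ n : List Bool, s = fun m => t (n ++ m)}.Finite) :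
    ∃ n : List Bool,
      μ {b | b ∈ cylinder n ∧ {k : ℕ | t (branchPrefix b k) = true}.Finite} = 0 ∨
      μ {b | b ∈ cylinder n ∧ {k : ℕ | t (branchPrefix b k) = false}.Finite} = 0 := by
  classical
  open Stmt3Aux in
  by_contra hcon
  push_neg at hcon
  -- Step A: some node has positive measure of "all labels false from here on"
  have hA := (hcon []).1
  have hsub : {b | b ∈ cylinder [] ∧ {k : ℕ | t (branchPrefix b k) = true}.Finite} ⊆
      ⋃ m : List Bool, Ev t m := by
    intro b hb
    obtain ⟨K, hK⟩ := hb.2.bddAbove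
    refine Set.mem_iUnion.2 ⟨branchPrefix b (K + 1), mem_cylinder_branchPrefix _ _, ?_⟩
    intro j hj
    rw [length_branchPrefix] at hj
    by_contra hfj
    have hmem : j ∈ {k : ℕ | t (branchPrefix b k) = true} := by
      simp only [Set.mem_setOf_eq]
      exact Bool.not_eq_false _ |>.mp hfj
    exact absurd (hK hmem) (by omega)
  have hU : μ (⋃ m : List Bool, Ev t m) ≠ 0 := fun h0 => hA (measure_mono_null hsub h0)
  have hEx : ∃ m, μ (Ev t m) ≠ 0 := by
    by_contra hall
    push_neg at hall
    exact hU (measure_iUnion_null hall)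
  obtain ⟨m₀, hm₀⟩ := hEx
  -- Step B: maximal subtree
  have hreg' : {s : List Bool → Bool | ∃ n : List Bool, s = subAt t n}.Finite := hreg
  obtain ⟨sstar, hsS, hmaxwrt⟩ := Set.Finite.exists_maximalFor Z _ hreg'
    ⟨t, ⟨[], by funext u; simp [subAt]⟩⟩
  have hmax : ∀ n : List Bool, Z (subAt t n) ≤ Z sstar := by
    intro n
    rcases le_total (Z (subAt t n)) (Z sstar) with h | h
    · exact h
    · exact (hmaxwrt ⟨n, rfl⟩ h).ge
  have hMpos : Z sstar ≠ 0 := by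
    intro h0
    exact Z_ne_zero_of_measure hμ hm₀ (le_antisymm (h0 ▸ hmax m₀) zero_le)
  have hMtop : Z sstar ≠ ⊤ := Z_ne_top sstar
  obtain ⟨mstar, hms⟩ := hsS
  have hmsZ : Z (subAt t mstar) = Z sstar := congrArg Z hms.symm
  -- Step C: propagation of the maximum
  have prop : ∀ (u m : List Bool), Z (subAt t m) = Z sstar →
      Z (subAt t (m ++ u)) = Z sstar := by
    intro u
    induction u with
    | nil => intro m h; simpa using h
    | cons c u ih =>
      intro m h
      have hne0 : Z (subAt t m) ≠ 0 := by rw [h]; exact hMpos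
      have hlab : (subAt t m) [] = false := label_false hne0
      have hrec := Z_rec hlab
      rw [← subAt_append t m [false], ← subAt_append t m [true]] at hrec
      rw [h] at hrec
      have hsum : 2 * Z sstar = Z (subAt t (m ++ [false])) + Z (subAt t (m ++ [true])) :=
        (ENNReal.eq_div_iff two_ne_zero ENNReal.ofNat_ne_top).1 hrec
      have hc : ∀ c' : Bool, Z (subAt t (m ++ [c'])) = Z sstar := by
        intro c'
        by_contra hne
        have hlt : Z (subAt t (m ++ [c'])) < Z sstar :=
          lt_of_le_of_ne (hmax _) hne
        have hlt2 : Z (subAt t (m ++ [false])) + Z (subAt t (m ++ [true])) <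
            Z sstar + Z sstar := by
          have hnt : ∀ n : List Bool, Z (subAt t n) ≠ ⊤ := fun n => Z_ne_top _
          cases c'
          · exact ENNReal.add_lt_add_of_lt_of_le (hnt _) hlt (hmax _)
          · rw [add_comm (Z (subAt t (m ++ [false]))), add_comm (Z sstar)]
            exact ENNReal.add_lt_add_of_lt_of_le (hnt _) hlt (hmax _)
        rw [← hsum, two_mul] at hlt2
        exact lt_irrefl _ hlt2
      have : m ++ c :: u = (m ++ [c]) ++ u := by simp
      rw [this]
      exact ih _ (hc c)
  -- Step D: all labels below mstar are false
  have hfalse : ∀ u : List Bool, t (mstar ++ u) = false := by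
    intro u
    have hZu : Z (subAt t (mstar ++ u)) = Z sstar := prop u mstar hmsZ
    have hl : (subAt t (mstar ++ u)) [] = false :=
      label_false (by rw [hZu]; exact hMpos)
    simpa [subAt] using hl
  -- Step E: the second PUCE condition fails at mstar
  have hBempty : {b | b ∈ cylinder mstar ∧ {k : ℕ | t (branchPrefix b k) = false}.Finite}
      = ∅ := by
    ext b
    simp only [Set.mem_setOf_eq, Set.mem_empty_iff_false, iff_false, not_and]
    intro hb hfin
    have hsubset : Set.Ici mstar.length ⊆ {k : ℕ | t (branchPrefix b k) = false} := by
      intro k hk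
      obtain ⟨u, hu⟩ := exists_append hb hk
      simp only [Set.mem_setOf_eq, hu]
      exact hfalse u
    exact (Set.Ici_infinite _) (hfin.subset hsubset)
  exact (hcon mstar).2 (by rw [hBempty]; exact measure_empty)
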